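/- Let M and B be m × n real matrices, let s ≤ n, suppose rank B ≤ s and ⟨M, B⟩_F = ‖B‖_F², and let μ : Fin n → ℝ be an antitone enumeration of the eigenvalues of the real symmetric matrix Mᵀ M. Then ‖B‖_F² ≤ ∑_{i < s} μ i; i.e., any matrix of rank at most s satisfying the projection orthogonality condition with respect to M has squared Frobenius norm at most the sum of the s largest eigenvalues of Mᵀ M. -/

import Mathlib

open Matrix Polynomial

section Aux

lemma card_filter_fin_lt {n s : ℕ} (hs : s ≤ n) :
    (Finset.univ.filter (fun i : Fin n => (i : ℕ) < s)).card = s := by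
  classical
  rw [← Finset.card_range s]
  apply Finset.card_bij (fun (a : Fin n) _ => (a : ℕ))
  · intro a ha
    simp only [Finset.mem_filter] at ha
    simpa using ha.2
  · intro a _ b _ hab
    exact Fin.val_injective hab
  · intro b hb
    simp only [Finset.mem_range] at hb
    exact ⟨⟨b, lt_of_lt_of_le hb hs⟩, by simp [hb], rfl⟩

lemma kyfan_aux {n s : ℕ} (hs : s ≤ n) (μ p : Fin n → ℝ) (hμ : Antitone μ)
    (hμ0 : ∀ i, 0 ≤ μ i) (hp0 : ∀ i, 0 ≤ p i) (hp1 : ∀ i, p i ≤ 1)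
    (hps : ∑ i, p i ≤ (s : ℝ)) :
    ∑ i, p i * μ i ≤ ∑ i ∈ Finset.univ.filter (fun i : Fin n => (i : ℕ) < s), μ i := by
  classical
  set t : ℝ := if h : s < n then μ ⟨s, h⟩ else 0 with ht
  have ht0 : 0 ≤ t := by
    rw [ht]
    split
    · exact hμ0 _
    · exact le_rfl
  have hle : ∀ i : Fin n, s ≤ (i : ℕ) → μ i ≤ t := by
    intro i hi
    have hsn : s < n := lt_of_le_of_lt hi i.isLt
    rw [ht, dif_pos hsn]
    exact hμ (show (⟨s, hsn⟩ : Fin n) ≤ i from hi)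
  have hge : ∀ i : Fin n, (i : ℕ) < s → t ≤ μ i := by
    intro i hi
    rw [ht]
    split
    · next h => exact hμ (show i ≤ (⟨s, h⟩ : Fin n) from le_of_lt hi)
    · exact hμ0 i
  set F := Finset.univ.filter (fun i : Fin n => (i : ℕ) < s) with hF
  have hcard : F.card = s := card_filter_fin_lt hs
  have hsplit := Finset.sum_filter_add_sum_filter_not Finset.univ
    (fun i : Fin n => (i : ℕ) < s) (fun i => p i * μ i)
  have hsplit2 := Finset.sum_filter_add_sum_filter_not Finset.univ
    (fun i : Fin n => (i : ℕ) < s) (fun i => p i * t)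
  have hA : ∑ i ∈ F, p i * μ i ≤ ∑ i ∈ F, ((μ i - t) + p i * t) := by
    refine Finset.sum_le_sum fun i hi => ?_
    have hi' : (i : ℕ) < s := (Finset.mem_filter.mp hi).2
    nlinarith [hp0 i, hp1 i, hge i hi']
  have hB : ∑ i ∈ Finset.univ.filter (fun i : Fin n => ¬ (i : ℕ) < s), p i * μ i
      ≤ ∑ i ∈ Finset.univ.filter (fun i : Fin n => ¬ (i : ℕ) < s), p i * t := by
    refine Finset.sum_le_sum fun i hi => ?_
    have hi' : s ≤ (i : ℕ) := le_of_not_gt (Finset.mem_filter.mp hi).2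
    exact mul_le_mul_of_nonneg_left (hle i hi') (hp0 i)
  have key : ∑ i, p i * μ i ≤ (∑ i ∈ F, (μ i - t)) + (∑ i, p i) * t := by
    calc ∑ i, p i * μ i
        = ∑ i ∈ F, p i * μ i
          + ∑ i ∈ Finset.univ.filter (fun i : Fin n => ¬ (i : ℕ) < s), p i * μ i := hsplit.symm
      _ ≤ ∑ i ∈ F, ((μ i - t) + p i * t)
          + ∑ i ∈ Finset.univ.filter (fun i : Fin n => ¬ (i : ℕ) < s), p i * t :=
          add_le_add hA hB
      _ = (∑ i ∈ F, (μ i - t)) + (∑ i ∈ F, p i * t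
          + ∑ i ∈ Finset.univ.filter (fun i : Fin n => ¬ (i : ℕ) < s), p i * t) := by
          rw [Finset.sum_add_distrib]; ring
      _ = (∑ i ∈ F, (μ i - t)) + ∑ i, p i * t := by rw [hsplit2]
      _ = (∑ i ∈ F, (μ i - t)) + (∑ i, p i) * t := by rw [Finset.sum_mul]
  have key2 : (∑ i ∈ F, (μ i - t)) + (∑ i, p i) * t ≤ ∑ i ∈ F, μ i := by
    have h2 : ∑ i ∈ F, (μ i - t) = (∑ i ∈ F, μ i) - s * t := by
      rw [Finset.sum_sub_distrib, Finset.sum_const, hcard, nsmul_eq_mul]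
    rw [h2]
    nlinarith [mul_le_mul_of_nonneg_right hps ht0]
  exact key.trans key2

lemma exists_perm_of_multiset_eq {n : ℕ} (μ lam : Fin n → ℝ) (hμ : Antitone μ)
    (h : Multiset.map lam Finset.univ.val = Multiset.map μ Finset.univ.val) :
    ∃ σ : Equiv.Perm (Fin n), lam = μ ∘ σ := by
  classical
  set τ := Tuple.sort lam with hτ
  have h1 : Monotone (lam ∘ τ) := Tuple.monotone_sort lam
  have h2 : Monotone (μ ∘ (Fin.revPerm : Equiv.Perm (Fin n))) := by
    intro a b hab
    exact hμ (Fin.rev_le_rev.mpr hab)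
  have hperm0 : List.Perm (List.ofFn lam) (List.ofFn μ) := by
    rw [← Multiset.coe_eq_coe]
    have : ∀ f : Fin n → ℝ, (↑(List.ofFn f) : Multiset ℝ)
        = Multiset.map f Finset.univ.val := by
      intro f
      simp [List.ofFn_eq_map, Fin.univ_def, ← Multiset.map_coe]
    rw [this, this, h]
  have hperm : List.Perm (List.ofFn (lam ∘ τ)) (List.ofFn (μ ∘ (Fin.revPerm : Equiv.Perm (Fin n)))) := by
    refine (τ.ofFn_comp_perm lam).trans (hperm0.trans ?_)
    exact ((Fin.revPerm : Equiv.Perm (Fin n)).ofFn_comp_perm μ).symm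
  have heq : lam ∘ τ = μ ∘ (Fin.revPerm : Equiv.Perm (Fin n)) :=
    List.ofFn_injective (List.Perm.eq_of_sortedLE (List.sortedLE_ofFn_iff.mpr h1) (List.sortedLE_ofFn_iff.mpr h2) hperm)
  refine ⟨τ.symm.trans (Fin.revPerm : Equiv.Perm (Fin n)), funext fun i => ?_⟩
  have := congrFun heq (τ.symm i)
  simpa using this

lemma charpoly_conj_unit {n : Type*} [DecidableEq n] [Fintype n] {R : Type*} [CommRing R]
    (U D V : Matrix n n R) (hUV : U * V = 1) :
    (U * D * V).charpoly = D.charpoly := by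
  have hmap : (C : R →+* R[X]).mapMatrix U * (C : R →+* R[X]).mapMatrix V = 1 := by
    rw [← _root_.map_mul, hUV, _root_.map_one]
  have key : charmatrix (U * D * V)
      = (C : R →+* R[X]).mapMatrix U * charmatrix D * (C : R →+* R[X]).mapMatrix V := by
    rw [charmatrix, charmatrix, Matrix.mul_sub, Matrix.sub_mul]
    congr 1
    · rw [((Matrix.scalar_commute (X : R[X]) (fun r' => Commute.all _ _)
        ((C : R →+* R[X]).mapMatrix U)).symm).eq, mul_assoc, hmap, mul_one]
    · rw [← _root_.map_mul, ← _root_.map_mul]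
  rw [Matrix.charpoly, Matrix.charpoly, key, det_mul, det_mul, mul_comm, ← mul_assoc,
    mul_comm (((C : R →+* R[X]).mapMatrix V).det), ← det_mul, hmap, det_one, one_mul]

lemma trace_sq_le_mul {m n : Type*} [Fintype m] [Fintype n]
    (X Y : Matrix m n ℝ) :
    ((Xᵀ * Y).trace) ^ 2 ≤ (Xᵀ * X).trace * (Yᵀ * Y).trace := by
  classical
  have htr : ∀ (Z W : Matrix m n ℝ),
      (Zᵀ * W).trace = ∑ p : n × m, Z p.2 p.1 * W p.2 p.1 := by
    intro Z W
    rw [Fintype.sum_prod_type]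
    simp [Matrix.trace, Matrix.diag, Matrix.mul_apply]
  rw [htr, htr, htr]
  simpa [sq] using Finset.sum_mul_sq_le_sq_mul_sq Finset.univ
    (fun p : n × m => X p.2 p.1) (fun p : n × m => Y p.2 p.1)

end Aux

lemma trace_transpose_mul_self_nonneg {m n : Type*} [Fintype m] [Fintype n]
    (Z : Matrix m n ℝ) : 0 ≤ (Zᵀ * Z).trace := by
  classical
  have : (Zᵀ * Z).trace = ∑ j, ∑ i, Z i j * Z i j := by
    simp [Matrix.trace, Matrix.diag, Matrix.mul_apply]
  rw [this]
  exact Finset.sum_nonneg fun j _ => Finset.sum_nonneg fun i _ => mul_self_nonneg _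

set_option maxHeartbeats 2000000 in
theorem low_rank_orthogonality_norm_bound
    {m n : ℕ} (M B : Matrix (Fin m) (Fin n) ℝ) (s : ℕ) (hs : s ≤ n)
    (hrank : B.rank ≤ s)
    (horth : (Mᵀ * B).trace = (Bᵀ * B).trace)
    (μ : Fin n → ℝ) (hμ : Antitone μ)
    (hchar : (Mᵀ * M).charpoly = ∏ i : Fin n, (X - C (μ i))) :
    (Bᵀ * B).trace ≤ ∑ i ∈ Finset.univ.filter (fun i : Fin n => (i : ℕ) < s), μ i := by
  classical
  have hS : (Mᵀ * M).IsHermitian := by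
    have := Matrix.isHermitian_conjTranspose_mul_self M
    rwa [conjTranspose_eq_transpose_of_trivial] at this
  have hpsd : (Mᵀ * M).PosSemidef := by
    have := Matrix.posSemidef_conjTranspose_mul_self M
    rwa [conjTranspose_eq_transpose_of_trivial] at this
  set lam : Fin n → ℝ := hS.eigenvalues with hlamdef
  have hlam0 : ∀ i, 0 ≤ lam i := fun i => hpsd.eigenvalues_nonneg i
  set U0 : Matrix (Fin n) (Fin n) ℝ := ↑(hS.eigenvectorUnitary) with hU0def
  have hU0inv : U0 * U0ᵀ = 1 := by
    have h := Matrix.mem_unitaryGroup_iff.mp hS.eigenvectorUnitary.2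
    rwa [Matrix.star_eq_conjTranspose, conjTranspose_eq_transpose_of_trivial] at h
  have hspec : Mᵀ * M = U0 * Matrix.diagonal lam * U0ᵀ := by
    have h := hS.spectral_theorem
    rw [Unitary.conjStarAlgAut_apply, Matrix.star_eq_conjTranspose, conjTranspose_eq_transpose_of_trivial] at h
    have hof : (RCLike.ofReal ∘ hS.eigenvalues : Fin n → ℝ) = lam := by
      funext i; simp [hlamdef]
    rwa [hof] at h
  -- charpoly computation
  have hcd : (Mᵀ * M).charpoly = ∏ i, (X - C (lam i)) := by
    rw [hspec, charpoly_conj_unit U0 (Matrix.diagonal lam) U0ᵀ hU0inv,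
      Matrix.charpoly_of_upperTriangular (Matrix.diagonal lam)
        (Matrix.blockTriangular_diagonal lam)]
    simp
  have hmult : Multiset.map lam Finset.univ.val = Multiset.map μ Finset.univ.val := by
    have h1 : (∏ i, (X - C (lam i))) = (∏ i, (X - C (μ i))) := by rw [← hcd, hchar]
    have r1 := congrArg Polynomial.roots h1
    have hroots : ∀ f : Fin n → ℝ,
        (∏ i, (X - C (f i))).roots = Multiset.map f Finset.univ.val := by
      intro f
      rw [Finset.prod_eq_multiset_prod]
      have hmm : Multiset.map (fun i => X - C (f i)) Finset.univ.val
          = Multiset.map (fun a => X - C a) (Multiset.map f Finset.univ.val) := by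
        rw [Multiset.map_map]; rfl
      rw [hmm, Polynomial.roots_multiset_prod_X_sub_C]
    rwa [hroots, hroots] at r1
  obtain ⟨σ, hσ⟩ := exists_perm_of_multiset_eq μ lam hμ hmult
  have hμ0 : ∀ j, 0 ≤ μ j := by
    intro j
    have : lam (σ.symm j) = μ j := by rw [hσ]; simp
    rw [← this]; exact hlam0 _
  -- the projection machinery
  set E := EuclideanSpace ℝ (Fin n) with hE
  set K : Submodule ℝ E := LinearMap.range (Matrix.toEuclideanLin Bᵀ) with hK
  set r : ℕ := Module.finrank ℝ K with hrdef
  have hrs : r ≤ s := by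
    have h1 : Bᵀ.rank = r := by
      rw [Matrix.rank_eq_finrank_range_toLin Bᵀ (PiLp.basisFun 2 ℝ (Fin n))
        (PiLp.basisFun 2 ℝ (Fin m)), hrdef, hK]
      rfl
    rw [← h1] at *
    calc Bᵀ.rank = B.rank := Matrix.rank_transpose B
      _ ≤ s := hrank
  set b : OrthonormalBasis (Fin r) ℝ K := stdOrthonormalBasis ℝ K with hb
  set W : Matrix (Fin n) (Fin r) ℝ := Matrix.of (fun i k => (b k : E) i) with hW
  have hinner : ∀ x y : K, (∑ i, (x : E) i * (y : E) i) = (inner ℝ x y : ℝ) := by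
    intro x y
    rw [Submodule.coe_inner, PiLp.inner_apply]
    simp [mul_comm]
  have hWW : Wᵀ * W = 1 := by
    ext k l
    rw [Matrix.mul_apply]
    have h1 : ∀ i, Wᵀ k i * W i l = (b k : E) i * (b l : E) i := by
      intro i; simp [hW, Matrix.transpose_apply]
    rw [Finset.sum_congr rfl fun i _ => h1 i, hinner, orthonormal_iff_ite.mp b.orthonormal k l]
    simp [Matrix.one_apply]
  have hP : W * (Wᵀ * Bᵀ) = Bᵀ := by
    ext i j
    have hxmem : (Matrix.toEuclideanLin Bᵀ) ((WithLp.equiv 2 (Fin m → ℝ)).symm (Pi.single j 1)) ∈ K :=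
      LinearMap.mem_range_self _ _
    set y : K := ⟨_, hxmem⟩ with hy
    have hyval : ∀ i', (y : E) i' = Bᵀ i' j := by
      intro i'
      show (Matrix.toEuclideanLin Bᵀ) ((WithLp.equiv 2 (Fin m → ℝ)).symm (Pi.single j 1)) i' = _
      rw [Matrix.toEuclideanLin_apply]
      simp [Matrix.mulVec_single]
    rw [Matrix.mul_apply]
    have h2 : ∀ k, W i k * (Wᵀ * Bᵀ) k j = b.repr y k * (b k : E) i := by
      intro k
      rw [Matrix.mul_apply]
      have h3 : ∑ i', Wᵀ k i' * Bᵀ i' j = b.repr y k := by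
        rw [b.repr_apply_apply]
        rw [← hinner (b k) y]
        refine Finset.sum_congr rfl fun i' _ => ?_
        rw [hyval i']
        simp [hW, Matrix.transpose_apply]
      rw [h3]
      simp [hW, mul_comm]
    rw [Finset.sum_congr rfl fun k _ => h2 k]
    rw [← hyval i]
    let φ : K →ₗ[ℝ] ℝ :=
      { toFun := fun z => (z : E) i, map_add' := fun _ _ => rfl, map_smul' := fun _ _ => rfl }
    have h1 := congrArg φ (b.sum_repr y)
    rw [map_sum] at h1
    simp only [_root_.map_smul, smul_eq_mul] at h1
    exact h1
  have hBP : B * W * Wᵀ = B := by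
    have h := congrArg Matrix.transpose hP
    rw [Matrix.transpose_mul, Matrix.transpose_mul, Matrix.transpose_transpose,
      Matrix.transpose_transpose] at h
    exact h
  -- trace identities
  set t : ℝ := (Bᵀ * B).trace with htdef
  have ht0 : 0 ≤ t := trace_transpose_mul_self_nonneg B
  have e2 : ((B * W)ᵀ * (B * W)).trace = t := by
    have c1 : ((B * W)ᵀ * (B * W)).trace = (Bᵀ * B).trace := by
      calc ((B * W)ᵀ * (B * W)).trace
          = (Wᵀ * (Bᵀ * (B * W))).trace := by
            rw [Matrix.transpose_mul, Matrix.mul_assoc]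
        _ = ((Bᵀ * (B * W)) * Wᵀ).trace := by rw [Matrix.trace_mul_comm]
        _ = (Bᵀ * (B * W * Wᵀ)).trace := by
            rw [Matrix.mul_assoc Bᵀ (B * W) Wᵀ]
        _ = (Bᵀ * B).trace := by rw [hBP]
    rw [htdef]; exact c1
  have e1 : ((M * W)ᵀ * (B * W)).trace = t := by
    have c1 : ((M * W)ᵀ * (B * W)).trace = (Mᵀ * B).trace := by
      calc ((M * W)ᵀ * (B * W)).trace
          = (Wᵀ * (Mᵀ * (B * W))).trace := by
            rw [Matrix.transpose_mul, Matrix.mul_assoc]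
        _ = ((Mᵀ * (B * W)) * Wᵀ).trace := by rw [Matrix.trace_mul_comm]
        _ = (Mᵀ * (B * W * Wᵀ)).trace := by
            rw [Matrix.mul_assoc Mᵀ (B * W) Wᵀ]
        _ = (Mᵀ * B).trace := by rw [hBP]
    rw [htdef]; exact c1.trans horth
  set g : ℝ := ((M * W)ᵀ * (M * W)).trace with hgdef
  have hCS : t ^ 2 ≤ g * t := by
    have h := trace_sq_le_mul (M * W) (B * W)
    rwa [e1, e2] at h
  -- the Ky Fan part
  set V1 : Matrix (Fin n) (Fin r) ℝ := U0ᵀ * W with hV1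
  have hV1t : V1ᵀ = Wᵀ * U0 := by
    rw [hV1, Matrix.transpose_mul, Matrix.transpose_transpose]
  have hVV : V1ᵀ * V1 = 1 := by
    rw [hV1t, hV1, Matrix.mul_assoc, ← Matrix.mul_assoc U0, hU0inv, Matrix.one_mul, hWW]
  set Q : Matrix (Fin n) (Fin n) ℝ := V1 * V1ᵀ with hQ
  have hQsym : Qᵀ = Q := by
    rw [hQ, Matrix.transpose_mul, Matrix.transpose_transpose]
  have hQidem : Q * Q = Q := by
    rw [hQ, Matrix.mul_assoc, ← Matrix.mul_assoc V1ᵀ, hVV, Matrix.one_mul]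
  have hq0 : ∀ i, 0 ≤ Q i i := by
    intro i
    rw [hQ, Matrix.mul_apply]
    exact Finset.sum_nonneg fun k _ => by
      rw [Matrix.transpose_apply]; exact mul_self_nonneg _
  have hsymQ : ∀ a c, Q a c = Q c a := by
    intro a c
    conv_lhs => rw [← hQsym, Matrix.transpose_apply]
  have hq1 : ∀ i, Q i i ≤ 1 := by
    intro i
    have h1 : Q i i = ∑ j, Q i j * Q i j := by
      conv_lhs => rw [← hQidem]
      rw [Matrix.mul_apply]
      refine Finset.sum_congr rfl fun j _ => ?_
      rw [hsymQ j i]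
    have h2 : Q i i * Q i i ≤ Q i i := by
      have hs1 := Finset.single_le_sum (f := fun j => Q i j * Q i j)
        (fun j _ => mul_self_nonneg _) (Finset.mem_univ i)
      rw [← h1] at hs1
      exact hs1
    nlinarith [hq0 i]
  have hqsum : ∑ i, Q i i = (r : ℝ) := by
    have h1 : ∑ i, Q i i = Q.trace := rfl
    rw [h1, hQ, Matrix.trace_mul_comm, hVV, Matrix.trace_one]
    simp
  have hgeq : g = ∑ i, lam i * Q i i := by
    have h1 : (M * W)ᵀ * (M * W) = V1ᵀ * Matrix.diagonal lam * V1 := by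
      rw [Matrix.transpose_mul, hV1t, hV1]
      simp only [Matrix.mul_assoc]
      rw [← Matrix.mul_assoc Mᵀ M W, hspec]
      simp only [Matrix.mul_assoc]
    rw [hgdef, h1, Matrix.trace_mul_comm (V1ᵀ * Matrix.diagonal lam) V1,
      ← Matrix.mul_assoc, ← hQ]
    have h3 : (Q * Matrix.diagonal lam).trace = ∑ i, Q i i * lam i := by
      simp [Matrix.trace, Matrix.diag, Matrix.mul_diagonal]
    rw [h3]
    exact Finset.sum_congr rfl fun i _ => mul_comm _ _
  -- conclude
  set p : Fin n → ℝ := fun j => Q (σ.symm j) (σ.symm j) with hp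
  have hfinal : ∑ i, lam i * Q i i ≤ ∑ i ∈ Finset.univ.filter (fun i : Fin n => (i : ℕ) < s), μ i := by
    have hre : ∑ i, lam i * Q i i = ∑ j, p j * μ j := by
      rw [← Equiv.sum_comp σ (fun j => p j * μ j)]
      refine Finset.sum_congr rfl fun i _ => ?_
      have h1 : p (σ i) = Q i i := by rw [hp]; simp
      have h2 : μ (σ i) = lam i := by rw [hσ]; rfl
      rw [h1, h2, mul_comm]
    rw [hre]
    refine kyfan_aux hs μ p hμ hμ0 (fun j => hq0 _) (fun j => hq1 _) ?_
    have : ∑ j, p j = ∑ i, Q i i := Equiv.sum_comp σ.symm (fun i => Q i i)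
    rw [this, hqsum]
    exact_mod_cast hrs
  rcases eq_or_lt_of_le ht0 with h0 | hpos
  · rw [← h0]
    exact Finset.sum_nonneg fun i _ => hμ0 i
  · have htg : t ≤ g := by nlinarith [hCS]
    calc t ≤ g := htg
      _ = ∑ i, lam i * Q i i := hgeq
      _ ≤ _ := hfinal
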